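/- For every R > 0, the exit-time density of the 1-ball integrates to one: ∫_0^∞ f₁^exit(t) dt = 1, i.e., f₁^exit is a probability density function on (0, ∞). -/

import Mathlib

open Real Filter Topology MeasureTheory

/-- Exit-time density of a standard Brownian motion started at the center of
`(-R, R)` and killed at `±R`. -/
noncomputable def f₁exit (R t : ℝ) : ℝ :=
  (π / (2 * R ^ 2)) * ∑' k : ℕ, (-1 : ℝ) ^ k * (2 * (k : ℝ) + 1) *
    Real.exp (-((2 * (k : ℝ) + 1) ^ 2 * π ^ 2 * t) / (8 * R ^ 2))

namespace F1exitAux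

lemma integral_exp_Ioi {r : ℝ} (hr : 0 < r) :
    ∫ t in Set.Ioi (0:ℝ), Real.exp (-(r * t)) = 1 / r := by
  have h := Real.integral_rpow_mul_exp_neg_mul_Ioi (a := 1) one_pos hr
  simpa [Real.Gamma_one] using h

lemma integral_mul_exp_Ioi {r : ℝ} (hr : 0 < r) :
    ∫ t in Set.Ioi (0:ℝ), t * Real.exp (-(r * t)) = 1 / r ^ 2 := by
  have h := Real.integral_rpow_mul_exp_neg_mul_Ioi (a := 2) two_pos hr
  rw [show (2:ℝ) - 1 = 1 by norm_num] at h
  simp only [Real.rpow_one] at h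
  rw [h, show ((2:ℝ)) = ((2:ℕ):ℝ) by norm_num, Real.rpow_natCast]
  norm_num [Real.Gamma_two]

lemma integrableOn_exp {r : ℝ} (hr : 0 < r) :
    MeasureTheory.IntegrableOn (fun t : ℝ => Real.exp (-(r * t))) (Set.Ioi 0) := by
  simpa [neg_mul] using exp_neg_integrableOn_Ioi 0 hr

lemma integrableOn_id_mul_exp {r : ℝ} (hr : 0 < r) :
    MeasureTheory.IntegrableOn (fun t : ℝ => t * Real.exp (-(r * t))) (Set.Ioi 0) := by
  have h := integrableOn_rpow_mul_exp_neg_mul_rpow (s := 1) (p := 1) (by norm_num) one_pos hr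
  simpa [Real.rpow_one, neg_mul] using h

noncomputable def gse (c : ℝ) (j : ℕ) (t : ℝ) : ℝ :=
  (4*(j:ℝ)+1) * Real.exp (-((4*(j:ℝ)+1)^2 * c * t)) -
    (4*(j:ℝ)+3) * Real.exp (-((4*(j:ℝ)+3)^2 * c * t))

noncomputable def bnd (c : ℝ) (j : ℕ) (t : ℝ) : ℝ :=
  (4*(j:ℝ)+1) * (16*(j:ℝ)+8) * c * (t * Real.exp (-((4*(j:ℝ)+1)^2 * c * t))) +
    2 * Real.exp (-((4*(j:ℝ)+3)^2 * c * t))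

lemma abs_gse_le {c : ℝ} (hc : 0 < c) (j : ℕ) {t : ℝ} (ht : 0 < t) :
    |gse c j t| ≤ bnd c j t := by
  have hj : (0:ℝ) ≤ (j:ℝ) := Nat.cast_nonneg j
  set a : ℝ := 4*(j:ℝ)+1 with ha
  set b : ℝ := 4*(j:ℝ)+3 with hb
  have ha0 : 0 < a := by positivity
  have hba : b^2 - a^2 = 16*(j:ℝ)+8 := by rw [ha, hb]; ring
  have hX : (0:ℝ) ≤ (b^2 - a^2)*c*t := by rw [hba]; positivity
  have hEb : Real.exp (-(b^2*c*t)) =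
      Real.exp (-(a^2*c*t)) * Real.exp (-((b^2-a^2)*c*t)) := by
    rw [← Real.exp_add]; ring_nf
  have h1 : 1 - Real.exp (-((b^2-a^2)*c*t)) ≤ (b^2-a^2)*c*t := by
    have := Real.add_one_le_exp (-((b^2-a^2)*c*t)); linarith
  have hEa : (0:ℝ) < Real.exp (-(a^2*c*t)) := Real.exp_pos _
  have hEbpos : (0:ℝ) < Real.exp (-(b^2*c*t)) := Real.exp_pos _
  have hdiff : Real.exp (-(a^2*c*t)) - Real.exp (-(b^2*c*t)) ≤
      Real.exp (-(a^2*c*t)) * ((b^2-a^2)*c*t) := by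
    rw [hEb]
    calc Real.exp (-(a^2*c*t)) - Real.exp (-(a^2*c*t)) * Real.exp (-((b^2-a^2)*c*t))
        = Real.exp (-(a^2*c*t)) * (1 - Real.exp (-((b^2-a^2)*c*t))) := by ring
      _ ≤ Real.exp (-(a^2*c*t)) * ((b^2-a^2)*c*t) :=
        mul_le_mul_of_nonneg_left h1 hEa.le
  have hmono : Real.exp (-(b^2*c*t)) ≤ Real.exp (-(a^2*c*t)) := by
    apply Real.exp_le_exp.mpr; nlinarith [hba, mul_pos hc ht]
  have hgse : gse c j t = a * (Real.exp (-(a^2*c*t)) - Real.exp (-(b^2*c*t)))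
      - 2 * Real.exp (-(b^2*c*t)) := by
    simp only [gse, ← ha, ← hb]; ring
  have hbnd : bnd c j t = a * (b^2 - a^2) * c * (t * Real.exp (-(a^2*c*t)))
      + 2 * Real.exp (-(b^2*c*t)) := by
    simp only [bnd, ← ha, ← hb, hba]; try ring
  rw [hgse, hbnd, abs_le]
  constructor
  · nlinarith [mul_le_mul_of_nonneg_left hdiff ha0.le]
  · nlinarith [mul_le_mul_of_nonneg_left hdiff ha0.le]

lemma summable_abs_aux {c t : ℝ} (hc : 0 < c) (ht : 0 < t) :
    Summable (fun k : ℕ => (2*(k:ℝ)+1) * Real.exp (-((2*(k:ℝ)+1)^2 * c * t))) := by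
  set r : ℝ := Real.exp (-(c*t)) with hr
  have hr0 : 0 < r := Real.exp_pos _
  have hr1 : r < 1 := Real.exp_lt_one_iff.mpr (by nlinarith)
  have hgeo : Summable (fun n : ℕ => (n:ℝ)^1 * r^n) :=
    summable_pow_mul_geometric_of_norm_lt_one 1 (by rwa [Real.norm_eq_abs, abs_of_pos hr0])
  have hg2 : Summable (fun n : ℕ => r^n) := summable_geometric_of_lt_one hr0.le hr1
  have hbase : Summable (fun k : ℕ => 2*((k:ℝ)^1 * r^k) + r^k) :=
    (hgeo.mul_left 2).add hg2
  refine Summable.of_nonneg_of_le (fun k => by positivity) (fun k => ?_) hbase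
  have hk : (0:ℝ) ≤ (k:ℝ) := Nat.cast_nonneg k
  have hexp : Real.exp (-((2*(k:ℝ)+1)^2 * c * t)) ≤ r^k := by
    rw [hr, ← Real.exp_nat_mul]
    apply Real.exp_le_exp.mpr
    have hct : (0:ℝ) < c*t := mul_pos hc ht
    nlinarith [mul_nonneg hk hct.le, mul_nonneg (mul_nonneg hk hk) hct.le]
  calc (2*(k:ℝ)+1) * Real.exp (-((2*(k:ℝ)+1)^2 * c * t)) ≤ (2*(k:ℝ)+1) * r^k :=
        mul_le_mul_of_nonneg_left hexp (by linarith)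
    _ = 2*((k:ℝ)^1 * r^k) + r^k := by ring

lemma tsum_pair {c t : ℝ} (hc : 0 < c) (ht : 0 < t) :
    (∑' k : ℕ, (-1:ℝ)^k * (2*(k:ℝ)+1) * Real.exp (-((2*(k:ℝ)+1)^2 * c * t))) =
      ∑' j : ℕ, gse c j t := by
  set u : ℕ → ℝ := fun k => (-1:ℝ)^k * (2*(k:ℝ)+1) * Real.exp (-((2*(k:ℝ)+1)^2 * c * t))
    with hu
  have habs := summable_abs_aux hc ht
  have hsum : Summable u := by
    refine Summable.of_norm_bounded habs fun k => ?_
    rw [hu]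
    simp only [norm_mul, norm_pow, norm_neg, norm_one, one_pow, one_mul, Real.norm_eq_abs]
    have hk : (0:ℝ) ≤ (k:ℝ) := Nat.cast_nonneg k
    rw [abs_of_nonneg (by linarith : (0:ℝ) ≤ 2*(k:ℝ)+1), abs_of_nonneg (Real.exp_pos _).le]
  have hinj2 : Function.Injective (fun j : ℕ => 2*j) := fun a b h => by dsimp at h; omega
  have hinj2' : Function.Injective (fun j : ℕ => 2*j+1) := fun a b h => by dsimp at h; omega
  have he : Summable (fun j : ℕ => u (2*j)) := hsum.comp_injective hinj2
  have ho : Summable (fun j : ℕ => u (2*j+1)) := hsum.comp_injective hinj2'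
  have hpair : ∀ j : ℕ, gse c j t = u (2*j) + u (2*j+1) := by
    intro j
    rw [hu]
    simp only [gse]
    have e1 : ((-1:ℝ))^(2*j) = 1 := by rw [pow_mul]; norm_num
    have e2 : ((-1:ℝ))^(2*j+1) = -1 := by rw [pow_succ, e1]; norm_num
    rw [e1, e2]
    have c1 : (2*((2*j:ℕ):ℝ)+1) = 4*(j:ℝ)+1 := by push_cast; ring
    have c2 : (2*((2*j+1:ℕ):ℝ)+1) = 4*(j:ℝ)+3 := by push_cast; ring
    rw [c1, c2]
    ring
  calc (∑' k, u k) = (∑' j, u (2*j)) + ∑' j, u (2*j+1) :=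
        (tsum_even_add_odd he ho).symm
    _ = ∑' j, (u (2*j) + u (2*j+1)) := (Summable.tsum_add he ho).symm
    _ = ∑' j, gse c j t := tsum_congr fun j => (hpair j).symm

lemma tsum_quarter : ∑' j : ℕ, (1/(4*(j:ℝ)+1) - 1/(4*(j:ℝ)+3)) = π/4 := by
  have hsum : Summable (fun j : ℕ => 1/(4*(j:ℝ)+1) - 1/(4*(j:ℝ)+3)) := by
    have base : Summable (fun j : ℕ => 2 * (1/((j:ℝ)+1)^2)) := by
      apply Summable.mul_left
      have h0 : Summable (fun n : ℕ => 1/((n:ℝ)^2)) :=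
        Real.summable_one_div_nat_pow.mpr one_lt_two
      have := (summable_nat_add_iff 1).mpr h0
      refine this.congr fun n => ?_
      push_cast; ring
    refine Summable.of_nonneg_of_le (fun j => ?_) (fun j => ?_) base
    · have hj : (0:ℝ) ≤ (j:ℝ) := Nat.cast_nonneg j
      rw [sub_nonneg]
      gcongr <;> linarith
    · have hj : (0:ℝ) ≤ (j:ℝ) := Nat.cast_nonneg j
      have h1 : (0:ℝ) < 4*(j:ℝ)+1 := by linarith
      have h3 : (0:ℝ) < 4*(j:ℝ)+3 := by linarith
      have heq : 1/(4*(j:ℝ)+1) - 1/(4*(j:ℝ)+3) = 2/((4*(j:ℝ)+1)*(4*(j:ℝ)+3)) := by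
        field_simp; ring
      rw [heq, mul_one_div]
      rw [div_le_div_iff₀ (by positivity) (by positivity)]
      nlinarith
  have h1 := hsum.hasSum.tendsto_sum_nat
  have hcomp : Tendsto (fun N : ℕ => 2*N) atTop atTop :=
    tendsto_atTop_atTop.mpr fun b => ⟨b, fun n hn => by omega⟩
  have h2 : Tendsto (fun N : ℕ => ∑ i ∈ Finset.range (2*N), (-1:ℝ)^i/(2*(i:ℝ)+1))
      atTop (𝓝 (π/4)) := Real.tendsto_sum_pi_div_four.comp hcomp
  have heq : ∀ N : ℕ, ∑ j ∈ Finset.range N, (1/(4*(j:ℝ)+1) - 1/(4*(j:ℝ)+3)) =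
      ∑ i ∈ Finset.range (2*N), (-1:ℝ)^i/(2*(i:ℝ)+1) := by
    intro N
    induction N with
    | zero => simp
    | succ n ih =>
      rw [Finset.sum_range_succ, ih, show 2*(n+1) = 2*n+1+1 by ring,
        Finset.sum_range_succ, Finset.sum_range_succ]
      have e1 : ((-1:ℝ))^(2*n) = 1 := by rw [pow_mul]; norm_num
      have e2 : ((-1:ℝ))^(2*n+1) = -1 := by rw [pow_succ, e1]; norm_num
      rw [e1, e2]
      push_cast
      ring
  simp only [heq] at h1
  exact tendsto_nhds_unique h1 h2

lemma integrableOn_gse {c : ℝ} (hc : 0 < c) (j : ℕ) :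
    MeasureTheory.IntegrableOn (gse c j) (Set.Ioi 0) := by
  have h1 : (0:ℝ) < (4*(j:ℝ)+1)^2 * c := by positivity
  have h2 : (0:ℝ) < (4*(j:ℝ)+3)^2 * c := by positivity
  exact ((integrableOn_exp h1).const_mul _).sub ((integrableOn_exp h2).const_mul _)

lemma integral_gse {c : ℝ} (hc : 0 < c) (j : ℕ) :
    ∫ t in Set.Ioi (0:ℝ), gse c j t =
      (1/c) * (1/(4*(j:ℝ)+1) - 1/(4*(j:ℝ)+3)) := by
  have h1 : (0:ℝ) < (4*(j:ℝ)+1)^2 * c := by positivity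
  have h2 : (0:ℝ) < (4*(j:ℝ)+3)^2 * c := by positivity
  have hj : (0:ℝ) ≤ (j:ℝ) := Nat.cast_nonneg j
  have e1 : (0:ℝ) < 4*(j:ℝ)+1 := by linarith
  have e2 : (0:ℝ) < 4*(j:ℝ)+3 := by linarith
  rw [show gse c j = (fun t => (4*(j:ℝ)+1) * Real.exp (-((4*(j:ℝ)+1)^2 * c * t)) -
      (4*(j:ℝ)+3) * Real.exp (-((4*(j:ℝ)+3)^2 * c * t))) from rfl]
  rw [integral_sub ((integrableOn_exp h1).const_mul _) ((integrableOn_exp h2).const_mul _),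
    integral_const_mul, integral_const_mul, integral_exp_Ioi h1, integral_exp_Ioi h2]
  field_simp

lemma integrableOn_bnd {c : ℝ} (hc : 0 < c) (j : ℕ) :
    MeasureTheory.IntegrableOn (bnd c j) (Set.Ioi 0) := by
  have h1 : (0:ℝ) < (4*(j:ℝ)+1)^2 * c := by positivity
  have h2 : (0:ℝ) < (4*(j:ℝ)+3)^2 * c := by positivity
  exact ((integrableOn_id_mul_exp h1).const_mul _).add ((integrableOn_exp h2).const_mul _)

lemma integral_bnd_le {c : ℝ} (hc : 0 < c) (j : ℕ) :
    ∫ t in Set.Ioi (0:ℝ), bnd c j t ≤ 10/c * (1/((j:ℝ)+1)^2) := by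
  have h1 : (0:ℝ) < (4*(j:ℝ)+1)^2 * c := by positivity
  have h2 : (0:ℝ) < (4*(j:ℝ)+3)^2 * c := by positivity
  have hj : (0:ℝ) ≤ (j:ℝ) := Nat.cast_nonneg j
  have hval : ∫ t in Set.Ioi (0:ℝ), bnd c j t =
      (4*(j:ℝ)+1) * (16*(j:ℝ)+8) * c * (1/((4*(j:ℝ)+1)^2*c)^2) + 2 * (1/((4*(j:ℝ)+3)^2*c)) := by
    rw [show bnd c j = (fun t => (4*(j:ℝ)+1) * (16*(j:ℝ)+8) * c *
        (t * Real.exp (-((4*(j:ℝ)+1)^2 * c * t))) +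
        2 * Real.exp (-((4*(j:ℝ)+3)^2 * c * t))) from rfl]
    rw [integral_add ((integrableOn_id_mul_exp h1).const_mul _)
      ((integrableOn_exp h2).const_mul _), integral_const_mul, integral_const_mul,
      integral_mul_exp_Ioi h1, integral_exp_Ioi h2]
  rw [hval]
  have key1 : (4*(j:ℝ)+1) * (16*(j:ℝ)+8) * c * (1/((4*(j:ℝ)+1)^2*c)^2) ≤
      8/c * (1/((j:ℝ)+1)^2) := by
    rw [mul_one_div, div_mul_div_comm,
      div_le_div_iff₀ (by positivity) (by positivity)]
    have hpoly : (4*(j:ℝ)+1) * (16*(j:ℝ)+8) * (((j:ℝ)+1)^2) ≤ 8*(4*(j:ℝ)+1)^4 := by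
      nlinarith [hj, mul_nonneg hj hj, mul_nonneg (mul_nonneg hj hj) hj,
        mul_nonneg (mul_nonneg (mul_nonneg hj hj) hj) hj]
    nlinarith [mul_le_mul_of_nonneg_left hpoly (mul_pos hc hc).le]
  have key2 : 2 * (1/((4*(j:ℝ)+3)^2*c)) ≤ 2/c * (1/((j:ℝ)+1)^2) := by
    rw [mul_one_div, div_mul_div_comm,
      div_le_div_iff₀ (by positivity) (by positivity)]
    nlinarith [mul_nonneg (mul_nonneg hj hj) hc.le, mul_nonneg hj hc.le]
  have : (10:ℝ)/c * (1/((j:ℝ)+1)^2) = 8/c * (1/((j:ℝ)+1)^2) + 2/c * (1/((j:ℝ)+1)^2) := by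
    ring
  rw [this]
  exact add_le_add key1 key2

lemma summable_M {c : ℝ} (hc : 0 < c) :
    Summable (fun j : ℕ => 10/c * (1/((j:ℝ)+1)^2)) := by
  apply Summable.mul_left
  have h0 : Summable (fun n : ℕ => 1/((n:ℝ)^2)) :=
    Real.summable_one_div_nat_pow.mpr one_lt_two
  have := (summable_nat_add_iff 1).mpr h0
  refine this.congr fun n => ?_
  push_cast; ring

end F1exitAux

open F1exitAux in
/-- The exit-time density of the 1-ball integrates to one:
`∫_0^∞ f₁^exit(t) dt = 1`. -/
theorem f₁exit_integral_eq_one (R : ℝ) (hR : 0 < R) :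
    ∫ t in Set.Ioi (0 : ℝ), f₁exit R t = 1 := by
  have hπ : (0:ℝ) < π := Real.pi_pos
  set c : ℝ := π^2 / (8*R^2) with hcdef
  have hc : 0 < c := by positivity
  have hfeq : Set.EqOn (f₁exit R)
      (fun t => (π / (2 * R ^ 2)) * ∑' j : ℕ, gse c j t) (Set.Ioi 0) := by
    intro t ht
    simp only [f₁exit]
    rw [← tsum_pair hc ht]
    congr 1
    refine tsum_congr fun k => ?_
    congr 2
    rw [hcdef]
    field_simp
    try ring
  rw [setIntegral_congr_fun measurableSet_Ioi hfeq]
  rw [MeasureTheory.integral_const_mul]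
  have hmeas : ∀ j : ℕ, AEStronglyMeasurable (gse c j) (volume.restrict (Set.Ioi 0)) := by
    intro j
    apply Continuous.aestronglyMeasurable
    unfold gse
    fun_prop
  have hlint : (∑' j : ℕ, ∫⁻ t in Set.Ioi (0:ℝ), ‖gse c j t‖₊) ≠ ⊤ := by
    have hb : ∀ j : ℕ, (∫⁻ t in Set.Ioi (0:ℝ), ‖gse c j t‖₊) ≤
        ENNReal.ofReal (10/c * (1/((j:ℝ)+1)^2)) := by
      intro j
      have step1 : (∫⁻ t in Set.Ioi (0:ℝ), ‖gse c j t‖₊) ≤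
          ∫⁻ t in Set.Ioi (0:ℝ), ENNReal.ofReal (bnd c j t) := by
        apply MeasureTheory.lintegral_mono_ae
        rw [MeasureTheory.ae_restrict_iff' measurableSet_Ioi]
        filter_upwards with t ht
        rw [← enorm_eq_nnnorm, ← ofReal_norm]
        exact ENNReal.ofReal_le_ofReal (by simpa [Real.norm_eq_abs] using abs_gse_le hc j ht)
      have step2 : (∫⁻ t in Set.Ioi (0:ℝ), ENNReal.ofReal (bnd c j t)) =
          ENNReal.ofReal (∫ t in Set.Ioi (0:ℝ), bnd c j t) := by
        rw [MeasureTheory.ofReal_integral_eq_lintegral_ofReal (integrableOn_bnd hc j)]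
        rw [Filter.EventuallyLE, MeasureTheory.ae_restrict_iff' measurableSet_Ioi]
        filter_upwards with t ht
        have ht' : (0:ℝ) < t := ht
        have hj : (0:ℝ) ≤ (j:ℝ) := Nat.cast_nonneg j
        unfold bnd
        positivity
      calc (∫⁻ t in Set.Ioi (0:ℝ), ‖gse c j t‖₊) ≤
            ∫⁻ t in Set.Ioi (0:ℝ), ENNReal.ofReal (bnd c j t) := step1
        _ = ENNReal.ofReal (∫ t in Set.Ioi (0:ℝ), bnd c j t) := step2
        _ ≤ ENNReal.ofReal (10/c * (1/((j:ℝ)+1)^2)) :=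
            ENNReal.ofReal_le_ofReal (integral_bnd_le hc j)
    have hsumM := summable_M hc
    have hlt : (∑' j : ℕ, ∫⁻ t in Set.Ioi (0:ℝ), ‖gse c j t‖₊) < ⊤ := by
      calc (∑' j : ℕ, ∫⁻ t in Set.Ioi (0:ℝ), ‖gse c j t‖₊)
          ≤ ∑' j : ℕ, ENNReal.ofReal (10/c * (1/((j:ℝ)+1)^2)) := ENNReal.tsum_le_tsum hb
        _ = ENNReal.ofReal (∑' j : ℕ, 10/c * (1/((j:ℝ)+1)^2)) :=
            (ENNReal.ofReal_tsum_of_nonneg (fun j => by positivity) hsumM).symm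
        _ < ⊤ := ENNReal.ofReal_lt_top
    exact hlt.ne
  rw [MeasureTheory.integral_tsum hmeas hlint]
  have hint : ∀ j : ℕ, ∫ t in Set.Ioi (0:ℝ), gse c j t =
      (1/c) * (1/(4*(j:ℝ)+1) - 1/(4*(j:ℝ)+3)) := fun j => integral_gse hc j
  rw [tsum_congr hint, tsum_mul_left, tsum_quarter]
  rw [hcdef]
  field_simp
  ring
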